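/- Let P be a flow-based polytope whose edge set E is connected when viewed as a set of undirected edges, and suppose there exists x ∈ P with x_e ∈ (0,1) for all e ∈ E. Then there exist a vertex f of P, a directed tree T with all edges in E, and a root r ∈ [n] such that Flip_f(T) is an arborescence rooted at r. -/

import Mathlib

open Finset

open scoped Classical

/-- The set `E₀` of non-loop directed edges on vertex set `Fin n`. -/
def E0 (n : ℕ) : Finset (Fin n × Fin n) :=
  Finset.univ.filter (fun e => e.1 ≠ e.2)

/-- The reverse of a directed edge. -/
def rev {n : ℕ} (e : Fin n × Fin n) : Fin n × Fin n := (e.2, e.1)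

/-- The underlying undirected (simple) graph of a set of directed edges. -/
def undirGraph (n : ℕ) (D : Finset (Fin n × Fin n)) : SimpleGraph (Fin n) where
  Adj u v := u ≠ v ∧ ((u, v) ∈ D ∨ (v, u) ∈ D)
  symm := ⟨fun u v h => ⟨h.1.symm, h.2.symm⟩⟩
  loopless := ⟨fun u h => h.1 rfl⟩

/-- There is a directed walk from `i` to `j` using only edges in `D`. -/
def reachesIn (n : ℕ) (D : Finset (Fin n × Fin n)) (i j : Fin n) : Prop :=
  Relation.ReflTransGen (fun a b => (a, b) ∈ D) i j

/-- `T` is a directed tree: `n-1` non-loop directed edges whose underlying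
undirected edges form a spanning tree of `Fin n`. -/
def IsDirTree (n : ℕ) (T : Finset (Fin n × Fin n)) : Prop :=
  T ⊆ E0 n ∧ T.card = n - 1 ∧ (undirGraph n T).Connected

/-- `A` is an arborescence rooted at `r`: a directed tree such that from every
vertex there is a directed walk to `r` using only edges of `A`. -/
def IsArb (n : ℕ) (r : Fin n) (A : Finset (Fin n × Fin n)) : Prop :=
  IsDirTree n A ∧ ∀ v : Fin n, reachesIn n A v r

/-- `Flip_f` of a single edge: reverse the edge iff `f e = 1`. -/
noncomputable def flipEdge (n : ℕ) (f : Fin n × Fin n → ℝ) (e : Fin n × Fin n) :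
    Fin n × Fin n :=
  if f e = 1 then rev e else e

/-- `Flip_f` of a set of edges. -/
noncomputable def flipSet (n : ℕ) (f : Fin n × Fin n → ℝ)
    (T : Finset (Fin n × Fin n)) : Finset (Fin n × Fin n) :=
  T.image (flipEdge n f)

/-- Membership in the flow-based polytope with variable edge set `E` and
demands `d` (points are extended by zero outside `E`). -/
def memFlowPolytope (n : ℕ) (E : Finset (Fin n × Fin n)) (d : Fin n → ℤ)
    (x : Fin n × Fin n → ℝ) : Prop :=
  (∀ e, e ∉ E → x e = 0) ∧ (∀ e ∈ E, x e ∈ Set.Icc (0 : ℝ) 1) ∧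
    ∀ v : Fin n, (∑ i, x (v, i)) - (∑ i, x (i, v)) = (d v : ℝ)

/-- A vertex of the flow-based polytope: a 0/1 point of the polytope. -/
def IsVertex (n : ℕ) (E : Finset (Fin n × Fin n)) (d : Fin n → ℤ)
    (f : Fin n × Fin n → ℝ) : Prop :=
  memFlowPolytope n E d f ∧ ∀ e ∈ E, f e = 0 ∨ f e = 1

/-- The 0/1 indicator of a set of edges. -/
def ind (n : ℕ) (S : Finset (Fin n × Fin n)) : Fin n × Fin n → ℝ :=
  fun e => if e ∈ S then 1 else 0

/-- The vertices of the flow-based polytope, encoded by their supports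
(sets of edges carrying flow `1`). -/
noncomputable def flowVertices (n : ℕ) (E : Finset (Fin n × Fin n)) (d : Fin n → ℤ) :
    Finset (Finset (Fin n × Fin n)) :=
  Finset.univ.filter (fun S => S ⊆ E ∧ memFlowPolytope n E d (ind n S))

/-- The polynomial `P_{f,r}(x)` of the Bernoulli factory. Since `f` is 0/1,
`x_e^{f_e}(1-x_e)^{1-f_e}` is `x_e` if `f_e = 1` and `1 - x_e` otherwise, and
`x_e^{1-f_e}(1-x_e)^{f_e}` is `1 - x_e` if `f_e = 1` and `x_e` otherwise. -/
noncomputable def Pfr (n : ℕ) (E : Finset (Fin n × Fin n))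
    (f : Fin n × Fin n → ℝ) (r : Fin n) (x : Fin n × Fin n → ℝ) : ℝ :=
  (∏ e ∈ E, if f e = 1 then x e else 1 - x e) *
    ∑ T ∈ Finset.univ.filter
        (fun T : Finset (Fin n × Fin n) =>
          IsDirTree n T ∧ T ⊆ E ∧ IsArb n r (flipSet n f T)),
      ∏ e ∈ T, (if f e = 1 then 1 - x e else x e)

/-- Membership in the circulation hyperplane `Circ̄`. -/
def memCircBar (n : ℕ) (y : Fin n × Fin n → ℝ) : Prop :=
  ∀ v : Fin n,
    (∑ i ∈ Finset.univ.filter (fun i => i ≠ v), y (v, i)) -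
      (∑ i ∈ Finset.univ.filter (fun i => i ≠ v), y (i, v)) = 0

/-- The arborescence-generating polynomial `SArb_r(y)`. -/
noncomputable def SArb (n : ℕ) (r : Fin n) (y : Fin n × Fin n → ℝ) : ℝ :=
  ∑ A ∈ Finset.univ.filter (fun A : Finset (Fin n × Fin n) => IsArb n r A),
    ∏ e ∈ A, y e

/-- The map `M_f`: `M_f(x)_e = x_e (1 - f_e) + (1 - x_ē) f_ē`. -/
def Mf (n : ℕ) (f x : Fin n × Fin n → ℝ) : Fin n × Fin n → ℝ :=
  fun e => x e * (1 - f e) + (1 - x (rev e)) * f (rev e)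

section Aux
variable {n : ℕ}

lemma rev_rev (e : Fin n × Fin n) : rev (rev e) = e := rfl

lemma mem_E0_iff {e : Fin n × Fin n} : e ∈ E0 n ↔ e.1 ≠ e.2 := by
  simp [E0]

lemma int_sum {α : Type*} (s : Finset α) (f : α → ℝ)
    (h : ∀ a ∈ s, ∃ k : ℤ, f a = k) : ∃ k : ℤ, ∑ a ∈ s, f a = k := by
  classical
  induction s using Finset.induction with
  | empty => exact ⟨0, by simp⟩
  | insert _ _ hx ih =>
    obtain ⟨k, hk⟩ := ih (fun a ha => h a (Finset.mem_insert_of_mem ha))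
    obtain ⟨m, hm⟩ := h _ (Finset.mem_insert_self _ _)
    exact ⟨m + k, by rw [Finset.sum_insert hx, hk, hm]; push_cast; ring⟩
lemma two_incident {E : Finset (Fin n × Fin n)} {d : Fin n → ℤ} {x : Fin n × Fin n → ℝ}
    (hE : E ⊆ E0 n) (hx : memFlowPolytope n E d x)
    {e : Fin n × Fin n} (he : e ∈ E.filter (fun a => x a ≠ 0 ∧ x a ≠ 1))
    {v : Fin n} (hv : e.1 = v ∨ e.2 = v) :
    ∃ e' ∈ E.filter (fun a => x a ≠ 0 ∧ x a ≠ 1), e' ≠ e ∧ (e'.1 = v ∨ e'.2 = v) := by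
  by_contra hcon
  push_neg at hcon
  obtain ⟨heE, he0, he1⟩ := Finset.mem_filter.1 he
  have he12 : e.1 ≠ e.2 := mem_E0_iff.1 (hE heE)
  have hint : ∀ a : Fin n × Fin n, a ≠ e → (a.1 = v ∨ a.2 = v) → ∃ k : ℤ, x a = k := by
    intro a hne hinc
    by_cases haE : a ∈ E
    · by_cases hfr : x a ≠ 0 ∧ x a ≠ 1
      · rcases hcon a (Finset.mem_filter.2 ⟨haE, hfr⟩) hne with ⟨h1, h2⟩
        rcases hinc with h | h
        · exact absurd h h1
        · exact absurd h h2
      · rcases not_and_or.1 hfr with h | h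
        · exact ⟨0, by simpa using Classical.not_not.1 h⟩
        · exact ⟨1, by simpa using Classical.not_not.1 h⟩
    · exact ⟨0, by rw [hx.1 a haE]; norm_num⟩
  have hcons := hx.2.2 v
  obtain ⟨e1, e2⟩ := e
  simp only at he12 hv hcons ⊢
  have hxe : ∃ k : ℤ, x (e1, e2) = k := by
    rcases hv with hv | hv
    · subst hv
      have hout : (∑ i, x (e1, i)) = x (e1, e2) + ∑ i ∈ Finset.univ.erase e2, x (e1, i) :=
        (Finset.add_sum_erase _ _ (Finset.mem_univ e2)).symm
      obtain ⟨k1, hk1⟩ := int_sum (Finset.univ.erase e2) (fun i => x (e1, i)) (by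
        intro i hi
        refine hint (e1, i) ?_ (Or.inl rfl)
        intro hh
        exact (Finset.mem_erase.1 hi).1 (Prod.ext_iff.1 hh).2)
      obtain ⟨k2, hk2⟩ := int_sum Finset.univ (fun i => x (i, e1)) (by
        intro i _
        refine hint (i, e1) ?_ (Or.inr rfl)
        intro hh
        exact he12 (Prod.ext_iff.1 hh).2)
      refine ⟨d e1 - k1 + k2, ?_⟩
      rw [hout, hk1, hk2] at hcons
      push_cast
      linarith
    · subst hv
      have hin : (∑ i, x (i, e2)) = x (e1, e2) + ∑ i ∈ Finset.univ.erase e1, x (i, e2) :=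
        (Finset.add_sum_erase _ _ (Finset.mem_univ e1)).symm
      obtain ⟨k1, hk1⟩ := int_sum (Finset.univ.erase e1) (fun i => x (i, e2)) (by
        intro i hi
        refine hint (i, e2) ?_ (Or.inr rfl)
        intro hh
        exact (Finset.mem_erase.1 hi).1 (Prod.ext_iff.1 hh).1)
      obtain ⟨k2, hk2⟩ := int_sum Finset.univ (fun i => x (e2, i)) (by
        intro i _
        refine hint (e2, i) ?_ (Or.inl rfl)
        intro hh
        exact he12 (Prod.ext_iff.1 hh).1.symm)
      refine ⟨k2 - d e2 - k1, ?_⟩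
      rw [hin, hk1, hk2] at hcons
      push_cast
      linarith
  obtain ⟨m, hm⟩ := hxe
  obtain ⟨hl, hr⟩ := hx.2.1 (e1, e2) heE
  rw [hm] at hl hr he0 he1
  have h0 : 0 ≤ m := by exact_mod_cast hl
  have h1 : m ≤ 1 := by exact_mod_cast hr
  interval_cases m
  · exact he0 (by norm_num)
  · exact he1 (by norm_num)

lemma exists_cycle {F : Finset (Fin n × Fin n)} (hF0 : F ⊆ E0 n) (hne : F.Nonempty)
    (hdeg : ∀ e ∈ F, ∀ v : Fin n, (e.1 = v ∨ e.2 = v) →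
      ∃ e' ∈ F, e' ≠ e ∧ (e'.1 = v ∨ e'.2 = v)) :
    ∃ (k : ℕ) (w : ℕ → Fin n) (c : ℕ → Fin n × Fin n), 0 < k ∧ w k = w 0 ∧
      (∀ i < k, c i ∈ F ∧ (c i = (w i, w (i+1)) ∨ c i = (w (i+1), w i))) ∧
      (∀ i < k, ∀ j < k, c i = c j → i = j) := by
  have hnpos : 0 < n := hne.choose.1.pos
  by_contra hcyc
  push_neg at hcyc
  have main : ∀ m, 1 ≤ m → m ≤ n →
      ∃ (v : ℕ → Fin n) (e : ℕ → Fin n × Fin n),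
        (∀ i < m, e i ∈ F ∧ (e i = (v i, v (i+1)) ∨ e i = (v (i+1), v i))) ∧
        (∀ i ≤ m, ∀ j ≤ m, v i = v j → i = j) ∧
        (∀ i < m, ∀ j < m, e i = e j → i = j) := by
    intro m
    induction m with
    | zero => omega
    | succ m ih =>
      intro _ hmn
      by_cases hm : m = 0
      · subst hm
        obtain ⟨e₀, he₀⟩ := hne
        have hne01 : e₀.1 ≠ e₀.2 := mem_E0_iff.1 (hF0 he₀)
        refine ⟨fun i => if i = 0 then e₀.1 else e₀.2, fun _ => e₀, ?_, ?_, ?_⟩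
        · intro i hi
          have : i = 0 := by omega
          subst this
          exact ⟨he₀, Or.inl (by simp)⟩
        · intro i hi j hj hij
          interval_cases i <;> interval_cases j <;> simp_all
        · intro i hi j hj _
          omega
      · obtain ⟨m', rfl⟩ : ∃ m', m = m' + 1 := ⟨m - 1, by omega⟩
        obtain ⟨v, e, hedge, hvinj, heinj⟩ := ih (by omega) (by omega)
        obtain ⟨helF, helor⟩ := hedge m' (by omega)
        have hlast : (e m').1 = v (m' + 1) ∨ (e m').2 = v (m' + 1) := by
          rcases helor with h | h
          · right; rw [h]
          · left; rw [h]
        obtain ⟨e', he'F, he'ne, he'inc⟩ := hdeg (e m') helF (v (m' + 1)) hlast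
        have h01 : e'.1 ≠ e'.2 := mem_E0_iff.1 (hF0 he'F)
        obtain ⟨w, hwu, hwor⟩ : ∃ w : Fin n, w ≠ v (m' + 1) ∧
            (e' = (v (m' + 1), w) ∨ e' = (w, v (m' + 1))) := by
          rcases he'inc with h | h
          · exact ⟨e'.2, fun hh => h01 (h.trans hh.symm), Or.inl (by rw [← h])⟩
          · exact ⟨e'.1, fun hh => h01 (hh.trans h.symm), Or.inr (by rw [← h])⟩
        have he'new : ∀ i < m' + 1, e' ≠ e i := by
          intro i hi hEq
          rcases Nat.lt_or_ge i m' with him | him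
          · obtain ⟨-, hor⟩ := hedge i (by omega)
            have hinc2 : (e i).1 = v (m' + 1) ∨ (e i).2 = v (m' + 1) := hEq ▸ he'inc
            have : v (m' + 1) = v i ∨ v (m' + 1) = v (i + 1) := by
              rcases hor with h | h <;> rcases hinc2 with h2 | h2 <;> rw [h] at h2 <;>
                simp only at h2
              · exact Or.inl h2.symm
              · exact Or.inr h2.symm
              · exact Or.inr h2.symm
              · exact Or.inl h2.symm
            rcases this with h | h
            · have := hvinj (m' + 1) (by omega) i (by omega) h
              omega
            · have := hvinj (m' + 1) (by omega) (i + 1) (by omega) h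
              omega
          · have : i = m' := by omega
            subst this
            exact he'ne hEq
        by_cases hwpath : ∃ j ≤ m' + 1, v j = w
        · -- found a cycle: contradiction
          exfalso
          obtain ⟨j, hj, hvj⟩ := hwpath
          have hjm : j ≠ m' + 1 := fun h => hwu (h ▸ hvj).symm
          have hjlt : j ≤ m' := by omega
          set k := m' + 1 - j + 1 with hk
          set W : ℕ → Fin n := fun i => if i = k then v j else v (j + i) with hW
          set C : ℕ → Fin n × Fin n := fun i => if i = k - 1 then e' else e (j + i) with hC
          have hWlt : ∀ i < k, W i = v (j + i) := by
            intro i hi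
            rw [hW]
            simp only [if_neg (by omega : ¬ i = k)]
          have hWkk : W k = v j := by rw [hW]; simp
          have hW0 : W 0 = v j := by rw [hWlt 0 (by omega)]; rfl
          have hcond : ∀ i < k, C i ∈ F ∧ (C i = (W i, W (i+1)) ∨ C i = (W (i+1), W i)) := by
            intro i hi
            by_cases hik : i = k - 1
            · subst hik
              have hCi : C (k - 1) = e' := by rw [hC]; dsimp only; rw [if_pos rfl]
              have hW1 : W (k - 1) = v (m' + 1) := by
                rw [hWlt _ (by omega)]
                congr 1
                omega
              have hk1 : k - 1 + 1 = k := by omega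
              refine ⟨by rw [hCi]; exact he'F, ?_⟩
              rw [hCi, hW1, hk1, hWkk, hvj]
              exact hwor
            · have hCi : C i = e (j + i) := by rw [hC]; dsimp only; rw [if_neg hik]
              obtain ⟨hF', hor'⟩ := hedge (j + i) (by omega)
              refine ⟨by rw [hCi]; exact hF', ?_⟩
              rw [hCi, hWlt i hi, hWlt (i+1) (by omega)]
              exact hor'
          have hinjC : ∀ i < k, ∀ i' < k, C i = C i' → i = i' := by
            intro i hi i' hi' hCC
            rw [hC] at hCC
            dsimp only at hCC
            by_cases h1 : i = k - 1 <;> by_cases h2 : i' = k - 1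
            · omega
            · rw [if_pos h1, if_neg h2] at hCC
              exact absurd hCC (he'new (j + i') (by omega))
            · rw [if_neg h1, if_pos h2] at hCC
              exact absurd hCC.symm (he'new (j + i) (by omega))
            · rw [if_neg h1, if_neg h2] at hCC
              have := heinj (j + i) (by omega) (j + i') (by omega) hCC
              omega
          obtain ⟨i, hi, i', hi', hEq, hne'⟩ :=
            hcyc k W C (by omega) (by rw [hWkk, hW0]) hcond
          exact hne' (hinjC i hi i' hi' hEq)
        · push_neg at hwpath
          refine ⟨fun i => if i = m' + 2 then w else v i,
                  fun i => if i = m' + 1 then e' else e i, ?_, ?_, ?_⟩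
          · intro i hi
            dsimp only
            by_cases h : i = m' + 1
            · subst h
              rw [if_pos rfl, if_neg (by omega : ¬ m' + 1 = m' + 2),
                if_pos (by omega : m' + 1 + 1 = m' + 2)]
              exact ⟨he'F, hwor⟩
            · rw [if_neg h, if_neg (by omega : ¬ i = m' + 2),
                if_neg (by omega : ¬ i + 1 = m' + 2)]
              exact hedge i (by omega)
          · intro i hi j hj hij
            dsimp only at hij
            by_cases h1 : i = m' + 2 <;> by_cases h2 : j = m' + 2
            · omega
            · rw [if_pos h1, if_neg h2] at hij
              exact absurd hij.symm (hwpath j (by omega))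
            · rw [if_neg h1, if_pos h2] at hij
              exact absurd hij (hwpath i (by omega))
            · rw [if_neg h1, if_neg h2] at hij
              exact hvinj i (by omega) j (by omega) hij
          · intro i hi j hj hij
            dsimp only at hij
            by_cases h1 : i = m' + 1 <;> by_cases h2 : j = m' + 1
            · omega
            · rw [if_pos h1, if_neg h2] at hij
              exact absurd hij (he'new j (by omega))
            · rw [if_neg h1, if_pos h2] at hij
              exact absurd hij.symm (he'new i (by omega))
            · rw [if_neg h1, if_neg h2] at hij
              exact heinj i (by omega) j (by omega) hij
  obtain ⟨v, e, -, hvinj, -⟩ := main n (by omega) le_rfl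
  have hcard : (Finset.range (n+1)).card ≤ (Finset.univ : Finset (Fin n)).card := by
    refine Finset.card_le_card_of_injOn v (fun a _ => Finset.mem_univ _) ?_
    intro a ha b hb h
    exact hvinj a (Nat.lt_succ_iff.1 (Finset.mem_range.1 ha))
      b (Nat.lt_succ_iff.1 (Finset.mem_range.1 hb)) h
  rw [Finset.card_range, Finset.card_univ, Fintype.card_fin] at hcard
  omega
lemma frac_decrease {E : Finset (Fin n × Fin n)} {d : Fin n → ℤ} {x : Fin n × Fin n → ℝ}
    (hE : E ⊆ E0 n) (hx : memFlowPolytope n E d x)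
    (hne : (E.filter fun a => x a ≠ 0 ∧ x a ≠ 1).Nonempty) :
    ∃ x', memFlowPolytope n E d x' ∧
      (E.filter fun a => x' a ≠ 0 ∧ x' a ≠ 1).card <
        (E.filter fun a => x a ≠ 0 ∧ x a ≠ 1).card := by
  classical
  set F := E.filter (fun a => x a ≠ 0 ∧ x a ≠ 1) with hF
  have hF0 : F ⊆ E0 n := fun a ha => hE (Finset.mem_filter.1 ha).1
  have hfrac : ∀ a ∈ F, 0 < x a ∧ x a < 1 := by
    intro a ha
    obtain ⟨haE, h0, h1⟩ := Finset.mem_filter.1 ha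
    obtain ⟨hl, hr⟩ := hx.2.1 a haE
    exact ⟨hl.lt_of_ne (Ne.symm h0), hr.lt_of_ne h1⟩
  obtain ⟨k, w, c, hk, hwk, hcond, hcinj⟩ :=
    exists_cycle hF0 hne (fun e he v hv => two_incident hE hx he hv)
  set σ : ℕ → ℝ := fun i => if c i = (w i, w (i+1)) then 1 else -1 with hσ
  set g : Fin n × Fin n → ℝ :=
    fun a => ∑ i ∈ Finset.range k, σ i * (if a = c i then 1 else 0) with hg
  have hσne : ∀ i, σ i ≠ 0 := by
    intro i
    rw [hσ]
    dsimp only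
    split <;> norm_num
  have hsupp : ∀ a, a ∉ F → g a = 0 := by
    intro a ha
    apply Finset.sum_eq_zero
    intro i hi
    have : a ≠ c i := fun h => ha (h ▸ (hcond i (Finset.mem_range.1 hi)).1)
    rw [if_neg this]
    ring
  have hg0 : g (c 0) = σ 0 := by
    rw [hg]
    dsimp only
    rw [Finset.sum_eq_single_of_mem 0 (Finset.mem_range.2 hk)]
    · rw [if_pos rfl]; ring
    · intro i hi hine
      rw [if_neg (fun h => hine (hcinj i (Finset.mem_range.1 hi) 0 hk h.symm))]
      ring
  have hrow : ∀ p : Fin n × Fin n, ∀ u : Fin n,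
      (∑ j : Fin n, (if (u, j) = p then (1:ℝ) else 0)) = if p.1 = u then 1 else 0 := by
    intro p u
    obtain ⟨a, b⟩ := p
    by_cases hau : a = u
    · subst hau
      rw [Finset.sum_eq_single_of_mem b (Finset.mem_univ b), if_pos rfl, if_pos rfl]
      intro j _ hj
      rw [if_neg (fun h => hj (Prod.ext_iff.1 h).2)]
    · rw [if_neg (fun h => hau h)]
      apply Finset.sum_eq_zero
      intro j _
      rw [if_neg (fun h => hau (Prod.ext_iff.1 h).1.symm)]
  have hcol : ∀ p : Fin n × Fin n, ∀ u : Fin n,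
      (∑ j : Fin n, (if (j, u) = p then (1:ℝ) else 0)) = if p.2 = u then 1 else 0 := by
    intro p u
    obtain ⟨a, b⟩ := p
    by_cases hbu : b = u
    · subst hbu
      rw [Finset.sum_eq_single_of_mem a (Finset.mem_univ a), if_pos rfl, if_pos rfl]
      intro j _ hj
      rw [if_neg (fun h => hj (Prod.ext_iff.1 h).1)]
    · rw [if_neg (fun h => hbu h)]
      apply Finset.sum_eq_zero
      intro j _
      rw [if_neg (fun h => hbu (Prod.ext_iff.1 h).2.symm)]
  have hcirc : ∀ u : Fin n, (∑ i, g (u, i)) - (∑ i, g (i, u)) = 0 := by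
    intro u
    have h1 : (∑ j : Fin n, g (u, j)) =
        ∑ i ∈ Finset.range k, σ i * (if (c i).1 = u then 1 else 0) := by
      rw [hg]
      dsimp only
      rw [Finset.sum_comm]
      refine Finset.sum_congr rfl (fun i _ => ?_)
      rw [← Finset.mul_sum, hrow]
    have h2 : (∑ j : Fin n, g (j, u)) =
        ∑ i ∈ Finset.range k, σ i * (if (c i).2 = u then 1 else 0) := by
      rw [hg]
      dsimp only
      rw [Finset.sum_comm]
      refine Finset.sum_congr rfl (fun i _ => ?_)
      rw [← Finset.mul_sum, hcol]
    rw [h1, h2, ← Finset.sum_sub_distrib]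
    have hterm : ∀ i ∈ Finset.range k,
        σ i * (if (c i).1 = u then (1:ℝ) else 0) - σ i * (if (c i).2 = u then 1 else 0)
        = (if w i = u then (1:ℝ) else 0) - (if w (i+1) = u then 1 else 0) := by
      intro i hi
      obtain ⟨hiF, hor⟩ := hcond i (Finset.mem_range.1 hi)
      have hnl : w i ≠ w (i + 1) := by
        have := mem_E0_iff.1 (hF0 hiF)
        rcases hor with h | h <;> rw [h] at this
        · exact this
        · exact fun hh => this hh.symm
      rcases hor with h | h
      · have hσi : σ i = 1 := by rw [hσ]; dsimp only; rw [if_pos h]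
        rw [hσi, h]
        ring
      · have hσi : σ i = -1 := by
          rw [hσ]
          dsimp only
          rw [if_neg]
          rw [h]
          intro hh
          exact hnl (Prod.ext_iff.1 hh).2
        rw [hσi, h]
        ring
    rw [Finset.sum_congr rfl hterm, Finset.sum_range_sub', hwk]
    ring
  -- augmentation
  set S := F.filter (fun a => g a ≠ 0) with hS
  have hSne : S.Nonempty :=
    ⟨c 0, Finset.mem_filter.2 ⟨(hcond 0 hk).1, by rw [hg0]; exact hσne 0⟩⟩
  set val : Fin n × Fin n → ℝ :=
    fun a => if 0 < g a then (1 - x a) / g a else x a / (-g a) with hval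
  set t := S.inf' hSne val with ht
  have htpos : 0 < t := by
    rw [ht, Finset.lt_inf'_iff]
    intro b hb
    obtain ⟨hbF, hbg⟩ := Finset.mem_filter.1 hb
    obtain ⟨hb0, hb1⟩ := hfrac b hbF
    rw [hval]
    dsimp only
    split
    · exact div_pos (by linarith) ‹_›
    · have hneg : g b < 0 := lt_of_le_of_ne (not_lt.1 ‹_›) hbg
      exact div_pos hb0 (by linarith)
  set x' : Fin n × Fin n → ℝ := fun a => x a + t * g a with hx'
  have hkey : ∀ a ∈ S, t ≤ val a := fun a ha => Finset.inf'_le _ ha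
  have hbounds : ∀ a ∈ E, 0 ≤ x' a ∧ x' a ≤ 1 := by
    intro a haE
    rw [hx']
    dsimp only
    by_cases hga : g a = 0
    · rw [hga]
      obtain ⟨h0, h1⟩ := hx.2.1 a haE
      constructor <;> linarith
    · have haF : a ∈ F := by
        by_contra h
        exact hga (hsupp a h)
      have haS : a ∈ S := Finset.mem_filter.2 ⟨haF, hga⟩
      have hv := hkey a haS
      obtain ⟨h0, h1⟩ := hfrac a haF
      rw [hval] at hv
      dsimp only at hv
      rcases lt_or_gt_of_ne hga with hneg | hpos
      · rw [if_neg (not_lt.2 hneg.le)] at hv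
        have h2 : t * (-g a) ≤ x a := (le_div_iff₀ (by linarith)).1 hv
        constructor <;> nlinarith
      · rw [if_pos hpos] at hv
        have h2 : t * g a ≤ 1 - x a := (le_div_iff₀ hpos).1 hv
        constructor <;> nlinarith
  have hmem' : memFlowPolytope n E d x' := by
    refine ⟨?_, fun a ha => hbounds a ha, ?_⟩
    · intro a ha
      rw [hx']
      dsimp only
      rw [hx.1 a ha, hsupp a (fun h => ha (Finset.mem_filter.1 h).1)]
      ring
    · intro v
      have hgv := hcirc v
      have hxv := hx.2.2 v
      rw [hx']
      dsimp only
      rw [Finset.sum_add_distrib, Finset.sum_add_distrib, ← Finset.mul_sum, ← Finset.mul_sum]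
      have hAB : (∑ i, g (v, i)) = ∑ i, g (i, v) := by linarith
      rw [hAB]
      linarith
  obtain ⟨astar, hastar, hta⟩ := Finset.exists_mem_eq_inf' hSne val
  obtain ⟨haF, hag⟩ := Finset.mem_filter.1 hastar
  have hint : x' astar = 0 ∨ x' astar = 1 := by
    rw [hx']
    dsimp only
    rw [← ht] at hta
    rcases lt_or_gt_of_ne hag with hneg | hpos
    · left
      rw [hta, hval]
      dsimp only
      rw [if_neg (not_lt.2 hneg.le)]
      have hng : -g astar ≠ 0 := neg_ne_zero.2 hag
      have h3 : x astar / (-g astar) * g astar = -(x astar / (-g astar) * (-g astar)) := by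
        ring
      rw [h3, div_mul_cancel₀ _ hng]
      ring
    · right
      rw [hta, hval]
      dsimp only
      rw [if_pos hpos]
      rw [div_mul_cancel₀ _ (ne_of_gt hpos)]
      ring
  refine ⟨x', hmem', ?_⟩
  apply Finset.card_lt_card
  refine (Finset.ssubset_iff_of_subset ?_).2 ⟨astar, haF, ?_⟩
  · intro a ha
    obtain ⟨haE, h0, h1⟩ := Finset.mem_filter.1 ha
    refine Finset.mem_filter.2 ⟨haE, ?_, ?_⟩ <;> intro hcontra
    · have hin : a ∉ F := fun h => (Finset.mem_filter.1 h).2.1 hcontra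
      exact h0 (by rw [hx']; dsimp only; rw [hsupp a hin, hcontra]; ring)
    · have hin : a ∉ F := fun h => (Finset.mem_filter.1 h).2.2 hcontra
      exact h1 (by rw [hx']; dsimp only; rw [hsupp a hin, hcontra]; ring)
  · intro hmem
    obtain ⟨-, h0, h1⟩ := Finset.mem_filter.1 hmem
    rcases hint with h | h
    · exact h0 h
    · exact h1 h
lemma exists_vertex {E : Finset (Fin n × Fin n)} {d : Fin n → ℤ} {x : Fin n × Fin n → ℝ}
    (hE : E ⊆ E0 n) (hx : memFlowPolytope n E d x) :
    ∃ f, IsVertex n E d f := by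
  classical
  suffices h : ∀ m (y : Fin n × Fin n → ℝ), memFlowPolytope n E d y →
      (E.filter fun a => y a ≠ 0 ∧ y a ≠ 1).card = m → ∃ f, IsVertex n E d f by
    exact h _ x hx rfl
  intro m
  induction m using Nat.strong_induction_on with
  | _ m ih =>
    intro y hy hcard
    rcases Finset.eq_empty_or_nonempty (E.filter fun a => y a ≠ 0 ∧ y a ≠ 1) with hemp | hne
    · refine ⟨y, hy, ?_⟩
      intro e heE
      by_contra hcon
      push_neg at hcon
      have : e ∈ E.filter fun a => y a ≠ 0 ∧ y a ≠ 1 :=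
        Finset.mem_filter.2 ⟨heE, hcon⟩
      rw [hemp] at this
      exact absurd this (Finset.notMem_empty e)
    · obtain ⟨y', hy', hlt⟩ := frac_decrease hE hy hne
      exact ih _ (hcard ▸ hlt) y' hy' rfl
end Aux
def nstep (n : ℕ) (D : Finset (Fin n × Fin n)) : ℕ → Fin n → Fin n → Prop
  | 0, a, b => a = b
  | (k+1), a, b => ∃ c, (a, c) ∈ D ∧ nstep n D k c b

section Aux2
variable {n : ℕ}

lemma reach_iff_nstep {D : Finset (Fin n × Fin n)} {a b : Fin n} :
    reachesIn n D a b ↔ ∃ k, nstep n D k a b := by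
  constructor
  · intro h
    induction h using Relation.ReflTransGen.head_induction_on with
    | refl => exact ⟨0, rfl⟩
    | head hstep _ ih =>
      obtain ⟨k, hk⟩ := ih
      exact ⟨k + 1, _, hstep, hk⟩
  · rintro ⟨k, hk⟩
    induction k generalizing a with
    | zero =>
      have hk' : a = b := hk
      exact hk' ▸ Relation.ReflTransGen.refl
    | succ k ih =>
      obtain ⟨c, hc, hk'⟩ := hk
      exact Relation.ReflTransGen.head hc (ih hk')

lemma exists_arb {D : Finset (Fin n × Fin n)} (hD : D ⊆ E0 n) (hn : 1 ≤ n) (r : Fin n)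
    (hreach : ∀ v, reachesIn n D v r) :
    ∃ A, A ⊆ D ∧ IsArb n r A := by
  classical
  have hex : ∀ v, ∃ k, nstep n D k v r := fun v => reach_iff_nstep.1 (hreach v)
  set dist : Fin n → ℕ := fun v => Nat.find (hex v) with hdist
  have hpar : ∀ v, ∃ c, v ≠ r → ((v, c) ∈ D ∧ dist c < dist v) := by
    intro v
    by_cases hv : v = r
    · exact ⟨r, fun h => absurd hv h⟩
    · have h0 : dist v ≠ 0 := by
        intro h
        have hspec : nstep n D (dist v) v r := Nat.find_spec (hex v)
        rw [h] at hspec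
        exact hv hspec
      obtain ⟨k, hk⟩ : ∃ k, dist v = k + 1 := ⟨dist v - 1, by omega⟩
      have hspec : nstep n D (k + 1) v r := hk ▸ Nat.find_spec (hex v)
      obtain ⟨c, hc, hstep⟩ := hspec
      refine ⟨c, fun _ => ⟨hc, ?_⟩⟩
      have : dist c ≤ k := Nat.find_min' (hex c) hstep
      omega
  choose p hp using hpar
  set A : Finset (Fin n × Fin n) :=
    (Finset.univ.filter (fun v => v ≠ r)).image (fun v => (v, p v)) with hA
  have hmemA : ∀ v, v ≠ r → (v, p v) ∈ A := fun v hv =>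
    Finset.mem_image_of_mem _ (Finset.mem_filter.2 ⟨Finset.mem_univ v, hv⟩)
  have hAD : A ⊆ D := by
    intro a ha
    obtain ⟨v, hv, rfl⟩ := Finset.mem_image.1 ha
    exact (hp v (Finset.mem_filter.1 hv).2).1
  have hreachA : ∀ v, reachesIn n A v r := by
    have key : ∀ m, ∀ v, dist v = m → reachesIn n A v r := by
      intro m
      induction m using Nat.strong_induction_on with
      | _ m ih =>
        intro v hv
        by_cases hvr : v = r
        · exact hvr ▸ Relation.ReflTransGen.refl
        · obtain ⟨hD', hlt⟩ := hp v hvr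
          exact Relation.ReflTransGen.head (hmemA v hvr) (ih (dist (p v)) (hv ▸ hlt) _ rfl)
    exact fun v => key (dist v) v rfl
  have hcard : A.card = n - 1 := by
    rw [hA, Finset.card_image_of_injOn (fun a _ b _ h => (Prod.ext_iff.1 h).1),
      Finset.filter_ne', Finset.card_erase_of_mem (Finset.mem_univ r),
      Finset.card_univ, Fintype.card_fin]
  have hA0 : A ⊆ E0 n := fun a ha => hD (hAD ha)
  have hconnA : (undirGraph n A).Connected := by
    have hre : ∀ v, (undirGraph n A).Reachable v r := by
      intro v
      have h := hreachA v
      induction h using Relation.ReflTransGen.head_induction_on with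
      | refl => exact SimpleGraph.Reachable.refl r
      | @head a c hstep _ ih =>
        have hne : a ≠ c := mem_E0_iff.1 (hA0 hstep)
        have hadj : (undirGraph n A).Adj a c := ⟨hne, Or.inl hstep⟩
        exact hadj.reachable.trans ih
    have : Nonempty (Fin n) := ⟨r⟩
    exact ⟨fun u v => (hre u).trans (hre v).symm⟩
  exact ⟨A, hAD, ⟨hA0, hcard, hconnA⟩, hreachA⟩

section Aux3
variable {n : ℕ}

lemma all_reach {E : Finset (Fin n × Fin n)} {d : Fin n → ℤ} {f x : Fin n × Fin n → ℝ}
    (hE : E ⊆ E0 n) (hconn : (undirGraph n E).Connected)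
    (hf : IsVertex n E d f) (hx : memFlowPolytope n E d x)
    (hxo : ∀ e ∈ E, x e ∈ Set.Ioo (0:ℝ) 1) (r : Fin n) :
    ∀ v, reachesIn n (E.image (flipEdge n f)) v r := by
  classical
  set D := E.image (flipEdge n f) with hD
  set y : Fin n × Fin n → ℝ := Mf n f x with hy
  have hf01 : ∀ e, f e = 0 ∨ f e = 1 := by
    intro e
    by_cases h : e ∈ E
    · exact hf.2 e h
    · exact Or.inl (hf.1.1 e h)
  have hx01 : ∀ e, 0 ≤ x e ∧ x e ≤ 1 := by
    intro e
    by_cases h : e ∈ E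
    · exact ⟨(hx.2.1 e h).1, (hx.2.1 e h).2⟩
    · rw [hx.1 e h]; norm_num
  have hf01' : ∀ e, 0 ≤ f e ∧ f e ≤ 1 := by
    intro e
    rcases hf01 e with h | h <;> rw [h] <;> norm_num
  have hynn : ∀ e, 0 ≤ y e := by
    intro e
    rw [hy]
    unfold Mf
    have h1 := hx01 e
    have h2 := hx01 (rev e)
    have h3 := hf01' e
    have h4 := hf01' (rev e)
    have := mul_nonneg h1.1 (by linarith : (0:ℝ) ≤ 1 - f e)
    have := mul_nonneg (by linarith : (0:ℝ) ≤ 1 - x (rev e)) h4.1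
    linarith
  have hypos : ∀ e ∈ D, 0 < y e := by
    intro e heD
    obtain ⟨e₀, he₀E, hfl⟩ := Finset.mem_image.1 heD
    obtain ⟨hx0, hx1⟩ := hxo e₀ he₀E
    rw [hy]
    unfold Mf
    by_cases h : f e₀ = 1
    · have he : e = rev e₀ := by rw [← hfl]; unfold flipEdge; rw [if_pos h]
      rw [he, rev_rev]
      have h2 := hx01 (rev e₀)
      have h4 := hf01' (rev e₀)
      have := mul_nonneg h2.1 (by linarith : (0:ℝ) ≤ 1 - f (rev e₀))
      rw [h]
      nlinarith
    · have hf0 : f e₀ = 0 := (hf01 e₀).resolve_right h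
      have he : e = e₀ := by rw [← hfl]; unfold flipEdge; rw [if_neg h]
      rw [he, hf0]
      have h2 := hx01 (rev e₀)
      have h4 := hf01' (rev e₀)
      have := mul_nonneg (by linarith : (0:ℝ) ≤ 1 - x (rev e₀)) h4.1
      nlinarith
  have hsuppD : ∀ e, y e ≠ 0 → e ∈ D := by
    intro e hye
    by_contra heD
    apply hye
    rw [hy]
    unfold Mf
    have h1 : f (rev e) = 0 := by
      rcases hf01 (rev e) with h | h
      · exact h
      · exfalso
        apply heD
        have hrevE : rev e ∈ E := by
          by_contra hh
          rw [hf.1.1 _ hh] at h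
          norm_num at h
        exact Finset.mem_image.2 ⟨rev e, hrevE, by unfold flipEdge; rw [if_pos h, rev_rev]⟩
    have h2 : x e * (1 - f e) = 0 := by
      by_cases heE : e ∈ E
      · have hfe1 : f e = 1 := by
          rcases hf.2 e heE with h | h
          · exfalso
            apply heD
            refine Finset.mem_image.2 ⟨e, heE, ?_⟩
            unfold flipEdge
            rw [if_neg (by rw [h]; norm_num)]
          · exact h
        rw [hfe1]
        ring
      · rw [hx.1 e heE]
        ring
    rw [h1, h2]
    ring
  have hcircy : ∀ u : Fin n, (∑ i, y (u, i)) - (∑ i, y (i, u)) = 0 := by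
    intro u
    have hper : ∀ i : Fin n, y (u, i) - y (i, u) =
        (x (u, i) - x (i, u)) - (f (u, i) - f (i, u)) := by
      intro i
      rw [hy]
      unfold Mf rev
      dsimp only
      ring
    have h1 : (∑ i, y (u, i)) - (∑ i, y (i, u)) = ∑ i, (y (u, i) - y (i, u)) :=
      (Finset.sum_sub_distrib _ _).symm
    rw [h1, Finset.sum_congr rfl (fun i _ => hper i), Finset.sum_sub_distrib,
      Finset.sum_sub_distrib, Finset.sum_sub_distrib, hx.2.2 u, hf.1.2.2 u]
    ring
  set R : Finset (Fin n) := Finset.univ.filter (fun v => reachesIn n D v r) with hR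
  have hrR : r ∈ R := Finset.mem_filter.2 ⟨Finset.mem_univ r, Relation.ReflTransGen.refl⟩
  have hhead : ∀ a b : Fin n, (a, b) ∈ D → b ∈ R → a ∈ R := by
    intro a b hab hbR
    exact Finset.mem_filter.2 ⟨Finset.mem_univ a,
      Relation.ReflTransGen.head hab (Finset.mem_filter.1 hbR).2⟩
  have hcut : ∀ u ∈ R, ∀ i ∈ Rᶜ, y (u, i) = 0 := by
    have hzero2 : ∑ u ∈ R, ∑ i ∈ Rᶜ, y (i, u) = 0 := by
      apply Finset.sum_eq_zero
      intro u huR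
      apply Finset.sum_eq_zero
      intro i hiC
      by_contra hne0
      exact (Finset.mem_compl.1 hiC) (hhead i u (hsuppD _ hne0) huR)
    have hz : ∑ u ∈ R, ∑ i ∈ Rᶜ, y (u, i) = 0 := by
      have h0 : ∑ u ∈ R, ((∑ i, y (u, i)) - (∑ i, y (i, u))) = 0 :=
        Finset.sum_eq_zero (fun u _ => hcircy u)
      have hsplit1 : ∀ u : Fin n, (∑ i, y (u, i)) =
          (∑ i ∈ R, y (u, i)) + ∑ i ∈ Rᶜ, y (u, i) :=
        fun u => (Finset.sum_add_sum_compl R _).symm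
      have hsplit2 : ∀ u : Fin n, (∑ i, y (i, u)) =
          (∑ i ∈ R, y (i, u)) + ∑ i ∈ Rᶜ, y (i, u) :=
        fun u => (Finset.sum_add_sum_compl R _).symm
      have hcomm : ∑ u ∈ R, ∑ i ∈ R, y (u, i) = ∑ u ∈ R, ∑ i ∈ R, y (i, u) :=
        Finset.sum_comm
      simp only [hsplit1, hsplit2] at h0
      rw [Finset.sum_sub_distrib, Finset.sum_add_distrib, Finset.sum_add_distrib] at h0
      rw [hcomm] at h0
      linarith [hzero2]
    intro u huR i hiC
    have h1 : ∀ u ∈ R, (0:ℝ) ≤ ∑ i ∈ Rᶜ, y (u, i) :=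
      fun u _ => Finset.sum_nonneg (fun i _ => hynn _)
    have h2 := (Finset.sum_eq_zero_iff_of_nonneg h1).1 hz u huR
    exact (Finset.sum_eq_zero_iff_of_nonneg (fun i _ => hynn _)).1 h2 i hiC
  have hadj : ∀ a b : Fin n, (undirGraph n E).Adj a b → b ∈ R → a ∈ R := by
    intro a b hab hbR
    obtain ⟨hne', hor⟩ := hab
    have hDor : (a, b) ∈ D ∨ (b, a) ∈ D := by
      rcases hor with h | h
      · by_cases hfe : f (a, b) = 1
        · right
          exact Finset.mem_image.2 ⟨(a, b), h, by unfold flipEdge; rw [if_pos hfe]; rfl⟩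
        · left
          exact Finset.mem_image.2 ⟨(a, b), h, by unfold flipEdge; rw [if_neg hfe]⟩
      · by_cases hfe : f (b, a) = 1
        · left
          exact Finset.mem_image.2 ⟨(b, a), h, by unfold flipEdge; rw [if_pos hfe]; rfl⟩
        · right
          exact Finset.mem_image.2 ⟨(b, a), h, by unfold flipEdge; rw [if_neg hfe]⟩
    rcases hDor with h | h
    · exact hhead a b h hbR
    · by_contra haR
      have h0 : y (b, a) = 0 := hcut b hbR a (Finset.mem_compl.2 haR)
      exact absurd h0 (ne_of_gt (hypos _ h))
  have hwalkclaim : ∀ (a b : Fin n), (undirGraph n E).Walk a b → b ∈ R → a ∈ R := by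
    intro a b pw
    induction pw with
    | nil => exact id
    | cons h q ih => exact fun hb => hadj _ _ h (ih hb)
  have hall : ∀ v : Fin n, v ∈ R := by
    intro v
    obtain ⟨pwalk⟩ := hconn.preconnected v r
    exact hwalkclaim v r pwalk hrR
  exact fun v => (Finset.mem_filter.1 (hall v)).2

end Aux3
end Aux2

/-- existence of a vertex `f` and a directed tree `T` in `E` such
that `Flip_f(T)` is an arborescence (rooted at some node). -/
theorem exists_flow_and_tree (n : ℕ) (hn : 2 ≤ n)
    (E : Finset (Fin n × Fin n)) (hE : E ⊆ E0 n) (d : Fin n → ℤ)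
    (hconn : (undirGraph n E).Connected)
    (hne : ∃ x, memFlowPolytope n E d x ∧ ∀ e ∈ E, x e ∈ Set.Ioo (0 : ℝ) 1) :
    ∃ f : Fin n × Fin n → ℝ, IsVertex n E d f ∧
      ∃ T : Finset (Fin n × Fin n), IsDirTree n T ∧ T ⊆ E ∧
        ∃ r : Fin n, IsArb n r (flipSet n f T) := by
  classical
  obtain ⟨x, hx, hxo⟩ := hne
  obtain ⟨f, hf⟩ := exists_vertex hE hx
  set D := E.image (flipEdge n f) with hD
  have hD0 : D ⊆ E0 n := by
    intro a ha
    obtain ⟨e₀, he₀E, rfl⟩ := Finset.mem_image.1 ha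
    have h01 : e₀.1 ≠ e₀.2 := mem_E0_iff.1 (hE he₀E)
    unfold flipEdge
    split
    · exact mem_E0_iff.2 (fun h => h01 h.symm)
    · exact mem_E0_iff.2 h01
  set r : Fin n := ⟨0, by omega⟩ with hr
  have hreach : ∀ v, reachesIn n D v r := all_reach hE hconn hf hx hxo r
  obtain ⟨A, hAD, hAarb⟩ := exists_arb hD0 (by omega) r hreach
  -- pull back A to a directed tree T ⊆ E
  have hpull : ∀ a : Fin n × Fin n, ∃ t, a ∈ A → (t ∈ E ∧ flipEdge n f t = a) := by
    intro a
    by_cases ha : a ∈ A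
    · obtain ⟨t, htE, htfl⟩ := Finset.mem_image.1 (hAD ha)
      exact ⟨t, fun _ => ⟨htE, htfl⟩⟩
    · exact ⟨a, fun h => absurd h ha⟩
  choose tf htf using hpull
  set T : Finset (Fin n × Fin n) := A.image tf with hT
  have hTE : T ⊆ E := by
    intro t ht
    obtain ⟨a, ha, rfl⟩ := Finset.mem_image.1 ht
    exact (htf a ha).1
  have hflipT : flipSet n f T = A := by
    rw [hT]
    unfold flipSet
    rw [Finset.image_image]
    rw [show flipEdge n f ∘ tf = fun a => flipEdge n f (tf a) from rfl]
    have : ∀ a ∈ A, flipEdge n f (tf a) = a := fun a ha => (htf a ha).2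
    calc A.image (fun a => flipEdge n f (tf a)) = A.image id := Finset.image_congr this
      _ = A := Finset.image_id
  have hTcard : T.card = n - 1 := by
    rw [hT, Finset.card_image_of_injOn, hAarb.1.2.1]
    intro a ha b hb h
    have h1 := (htf a ha).2
    have h2 := (htf b hb).2
    rw [← h1, ← h2, h]
  have hgraphs : undirGraph n T = undirGraph n A := by
    have hmemiff : ∀ u v : Fin n, ((u, v) ∈ T ∨ (v, u) ∈ T) ↔ ((u, v) ∈ A ∨ (v, u) ∈ A) := by
      intro u v
      have fwd : ∀ p : Fin n × Fin n, p ∈ T → (flipEdge n f p ∈ A ∧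
          (flipEdge n f p = p ∨ flipEdge n f p = rev p)) := by
        intro p hp
        obtain ⟨a, ha, rfl⟩ := Finset.mem_image.1 hp
        refine ⟨by rw [(htf a ha).2]; exact ha, ?_⟩
        unfold flipEdge
        split
        · exact Or.inr rfl
        · exact Or.inl rfl
      have bwd : ∀ a : Fin n × Fin n, a ∈ A → (tf a ∈ T ∧ (tf a = a ∨ tf a = rev a)) := by
        intro a ha
        refine ⟨Finset.mem_image_of_mem _ ha, ?_⟩
        have h2 := (htf a ha).2
        unfold flipEdge at h2
        by_cases hc : f (tf a) = 1
        · rw [if_pos hc] at h2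
          right
          have h3 := congrArg rev h2
          rwa [rev_rev] at h3
        · rw [if_neg hc] at h2
          left
          exact h2
      constructor
      · rintro (h | h)
        · obtain ⟨hA1, hA2 | hA2⟩ := fwd _ h <;> rw [hA2] at hA1
          · exact Or.inl hA1
          · exact Or.inr hA1
        · obtain ⟨hA1, hA2 | hA2⟩ := fwd _ h <;> rw [hA2] at hA1
          · exact Or.inr hA1
          · exact Or.inl hA1
      · rintro (h | h)
        · obtain ⟨hT1, hT2 | hT2⟩ := bwd _ h <;> rw [hT2] at hT1
          · exact Or.inl hT1
          · exact Or.inr hT1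
        · obtain ⟨hT1, hT2 | hT2⟩ := bwd _ h <;> rw [hT2] at hT1
          · exact Or.inr hT1
          · exact Or.inl hT1
    refine SimpleGraph.ext ?_
    funext u v
    show (u ≠ v ∧ ((u, v) ∈ T ∨ (v, u) ∈ T)) = (u ≠ v ∧ ((u, v) ∈ A ∨ (v, u) ∈ A))
    rw [hmemiff]
  have hTtree : IsDirTree n T :=
    ⟨fun t ht => hE (hTE ht), hTcard, by rw [hgraphs]; exact hAarb.1.2.2⟩
  exact ⟨f, hf, T, hTtree, hTE, r, by rw [hflipT]; exact hAarb⟩
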